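/- Let \sK = \sM \oplus \sM^\perp and let B = [[B_{11}, B_{12}],[B_{12}^*, B_{22}]] \in B(\sK) be selfadjoint. Define C_0 = I + B_{12}(I + B_{22}^2)^{-1} B_{12}^* and C = C_0^{-1/2}[B_{11} - B_{12}(I + B_{22}^2)^{-1/2} B_{22} (I + B_{22}^2)^{-1/2} B_{12}^*] C_0^{-1/2}, both in B(\sM). Then I + i B_{11} + B_{12}(I + i B_{22})^{-1} B_{12}^* = C_0^{1/2} (I + iC) C_0^{1/2}. -/

import Mathlib

open scoped ComplexInnerProductSpace
open Complex ContinuousLinearMap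

/-- With `B = [[B₁₁, B₁₂],[B₁₂*, B₂₂]]` selfadjoint with respect to `K = M ⊕ Mᗮ`
(summands modelled as `M`, `M'`), `S = (I+B₂₂²)⁻¹`, `R = (I+B₂₂²)^{-1/2}`,
`C₀ = I + B₁₂ S B₁₂*`, `Q = C₀^{1/2}` (with inverse `Qi`), `V = (I+iB₂₂)⁻¹`, and
`C = C₀^{-1/2}[B₁₁ - B₁₂ R B₂₂ R B₁₂*] C₀^{-1/2}`, one has
`I + iB₁₁ + B₁₂ (I+iB₂₂)⁻¹ B₁₂* = C₀^{1/2} (I + iC) C₀^{1/2}`. -/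
theorem block_factorization {M M' : Type*}
    [NormedAddCommGroup M] [InnerProductSpace ℂ M] [CompleteSpace M]
    [NormedAddCommGroup M'] [InnerProductSpace ℂ M'] [CompleteSpace M']
    (B11 : M →L[ℂ] M) (hB11 : IsSelfAdjoint B11)
    (B12 : M' →L[ℂ] M) (B22 : M' →L[ℂ] M') (hB22 : IsSelfAdjoint B22)
    (S : M' →L[ℂ] M')
    (hS1 : (1 + B22 ∘L B22) ∘L S = 1) (hS2 : S ∘L (1 + B22 ∘L B22) = 1)
    (R : M' →L[ℂ] M') (hRsa : IsSelfAdjoint R) (hRpos : ∀ x, 0 ≤ (⟪x, R x⟫).re)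
    (hRB : R ∘L B22 = B22 ∘L R) (hRR : R ∘L R = S)
    (Q : M →L[ℂ] M) (hQsa : IsSelfAdjoint Q) (hQpos : ∀ x, 0 ≤ (⟪x, Q x⟫).re)
    (hQQ : Q ∘L Q = 1 + B12 ∘L S ∘L (ContinuousLinearMap.adjoint B12))
    (Qi : M →L[ℂ] M) (hQi1 : Q ∘L Qi = 1) (hQi2 : Qi ∘L Q = 1)
    (V : M' →L[ℂ] M')
    (hV1 : (1 + Complex.I • B22) ∘L V = 1) (hV2 : V ∘L (1 + Complex.I • B22) = 1) :
    1 + Complex.I • B11 + B12 ∘L V ∘L (ContinuousLinearMap.adjoint B12)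
      = Q ∘L (1 + Complex.I •
          (Qi ∘L (B11 - B12 ∘L R ∘L B22 ∘L R ∘L (ContinuousLinearMap.adjoint B12)) ∘L Qi))
          ∘L Q := by
  set A := ContinuousLinearMap.adjoint B12 with hA
  have hW : (1 + Complex.I • B22) ∘L (S - Complex.I • (B22 ∘L S)) = 1 := by
    ext x
    have h1x := DFunLike.congr_fun hS1 x
    simp only [add_apply, comp_apply, one_apply_eq_self] at h1x
    simp only [comp_apply, add_apply, smul_apply, one_apply_eq_self, sub_apply, map_sub, map_smul,
      smul_add, smul_sub, smul_smul, Complex.I_mul_I, neg_one_smul]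
    linear_combination (norm := module) h1x
  have hV : V = S - Complex.I • (B22 ∘L S) := by
    calc V = V ∘L ((1 + Complex.I • B22) ∘L (S - Complex.I • (B22 ∘L S))) := by
            rw [hW]; exact (mul_one V).symm
      _ = (V ∘L (1 + Complex.I • B22)) ∘L (S - Complex.I • (B22 ∘L S)) := by
            rw [comp_assoc]
      _ = S - Complex.I • (B22 ∘L S) := by rw [hV2]; exact one_mul _
  have hBS : B22 ∘L S = R ∘L (B22 ∘L R) := by
    ext x
    have h := DFunLike.congr_fun hRB (R x)
    have h2 := DFunLike.congr_fun hRR x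
    simp only [comp_apply] at *
    rw [← h2, ← h]
  have hL : B12 ∘L V ∘L A
      = B12 ∘L S ∘L A - Complex.I • (B12 ∘L R ∘L B22 ∘L R ∘L A) := by
    rw [hV]
    simp only [sub_comp, smul_comp, comp_sub, comp_smul, hBS, comp_assoc]
  have hR : Q ∘L (1 + Complex.I •
        (Qi ∘L (B11 - B12 ∘L R ∘L B22 ∘L R ∘L A) ∘L Qi)) ∘L Q
      = Q ∘L Q + Complex.I • (B11 - B12 ∘L R ∘L B22 ∘L R ∘L A) := by
    have key : Q ∘L ((Qi ∘L (B11 - B12 ∘L R ∘L B22 ∘L R ∘L A) ∘L Qi) ∘L Q)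
        = B11 - B12 ∘L R ∘L B22 ∘L R ∘L A := by
      rw [comp_assoc, comp_assoc, hQi2, one_def, comp_id, ← comp_assoc, hQi1, one_def, id_comp]
    simp only [add_comp, smul_comp, comp_add, comp_smul, one_def, id_comp, comp_id, key]
  rw [hL, hR, hQQ]
  simp only [smul_sub]
  abel
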